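/- arXiv:1408.1799 — 3 statements merged into one kernel-verified Lean document; each statement's English description precedes it below -/
import Mathlib

section
/- Assume G and f satisfy the rewiring properties (H1) and (H2). Let u and v be reachable vertices with f u = f v and G.dist u v ≥ 4. Then there exists a vertex w with f w = f u such that G.dist u v = G.dist u w + G.dist w v and 2 ≤ G.dist u w ≤ G.dist u v − 2. (Abstract form of Proposition 2.4(1): if L and L' are m-component links with coherent band-Gordian distance d(L,L') ≥ 4, then there exists an m-component link L'' with d(L,L') = d(L,L'') + d(L'',L') and 2 ≤ d(L,L'') ≤ d(L,L') − 2; the rewiring properties are the content of Lemma 2.2.) -/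
private lemma claimC {V : Type*} {G : SimpleGraph V} {f : V → ℤ}
    (hf : ∀ u v : V, G.Adj u v → |f u - f v| = 1)
    (H2 : ∀ (m : ℤ) (x₀ x₁ x₂ x₃ : V), G.Adj x₀ x₁ → G.Adj x₁ x₂ → G.Adj x₂ x₃ →
      f x₀ = m - 1 → f x₁ = m → f x₂ = m + 1 → f x₃ = m →
      ∃ y₁ y₂ : V, G.Adj x₀ y₁ ∧ G.Adj y₁ y₂ ∧ G.Adj y₂ x₃ ∧ f y₁ = m ∧ f y₂ = m - 1) :
    ∀ {x₁ v : V} (p : G.Walk x₁ v) (x₀ : V), G.Adj x₀ x₁ → f x₁ = f x₀ + 1 →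
      f v ≤ f x₀ →
      ∃ (y z : V) (q : G.Walk z v), G.Adj x₀ y ∧ G.Adj y z ∧ f y = f x₀ + 1 ∧
        f z = f x₀ ∧ q.length + 2 = p.length + 1 := by
  intro x₁ v p
  induction p with
  | nil => intro x₀ h1 h2 h3; omega
  | @cons a b c h p' ih =>
    intro x₀ hadj hlev hv
    have hb : f a - f b = 1 ∨ f a - f b = -1 := abs_eq (by norm_num) |>.mp (hf a b h)
    rcases (by omega : f b = f x₀ ∨ f b = f x₀ + 2) with hb' | hb'
    · exact ⟨a, b, p', hadj, h, hlev, hb', by simp⟩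
    · obtain ⟨y', z', q', hay', hy'z', hfy', hfz', hlen'⟩ :=
        ih a h (by omega) (by omega)
      obtain ⟨y₁, y₂, h1, h2, h3, h4, h5⟩ :=
        H2 (f x₀ + 1) x₀ a y' z' hadj hay' hy'z' (by omega) (by omega) (by omega) (by omega)
      exact ⟨y₁, y₂, SimpleGraph.Walk.cons h3 q', h1, h2, by omega, by omega, by
        simp only [SimpleGraph.Walk.length_cons]; omega⟩

private lemma claimC' {V : Type*} {G : SimpleGraph V} {f : V → ℤ}
    (hf : ∀ u v : V, G.Adj u v → |f u - f v| = 1)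
    (H1 : ∀ (m : ℤ) (u w v : V), G.Adj u w → G.Adj w v →
      f u = m → f w = m - 1 → f v = m →
      ∃ w' : V, G.Adj u w' ∧ G.Adj w' v ∧ f w' = m + 1) :
    ∀ {x₁ v : V} (p : G.Walk x₁ v) (x₀ : V), G.Adj x₀ x₁ → f x₁ = f x₀ - 1 →
      f x₀ ≤ f v →
      ∃ (y z : V) (q : G.Walk z v), G.Adj x₀ y ∧ G.Adj y z ∧ f y = f x₀ - 1 ∧
        f z = f x₀ ∧ q.length + 2 = p.length + 1 := by
  intro x₁ v p
  induction p with
  | nil => intro x₀ h1 h2 h3; omega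
  | @cons a b c h p' ih =>
    intro x₀ hadj hlev hv
    have hb : f a - f b = 1 ∨ f a - f b = -1 := abs_eq (by norm_num) |>.mp (hf a b h)
    rcases (by omega : f b = f x₀ ∨ f b = f x₀ - 2) with hb' | hb'
    · exact ⟨a, b, p', hadj, h, hlev, hb', by simp⟩
    · obtain ⟨y', z', q', hay', hy'z', hfy', hfz', hlen'⟩ :=
        ih a h (by omega) (by omega)
      obtain ⟨w', hw1, hw2, hw3⟩ :=
        H1 (f x₀ - 1) a y' z' hay' hy'z' (by omega) (by omega) (by omega)
      exact ⟨a, w', SimpleGraph.Walk.cons hw2 q', hadj, hw1, by omega, by omega, by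
        simp only [SimpleGraph.Walk.length_cons]; omega⟩

/-- Abstract form of Proposition 2.4(1): under the rewiring properties (H1) and (H2),
if `f u = f v` and the distance between `u` and `v` is at least 4, then there is an
intermediate vertex `w` on a geodesic with `f w = f u` and `2 ≤ dist u w ≤ dist u v - 2`. -/
theorem exists_intermediate_same_level {V : Type*} (G : SimpleGraph V) (f : V → ℤ)
    (hf : ∀ u v : V, G.Adj u v → |f u - f v| = 1)
    (H1 : ∀ (m : ℤ) (u w v : V), G.Adj u w → G.Adj w v →
      f u = m → f w = m - 1 → f v = m →
      ∃ w' : V, G.Adj u w' ∧ G.Adj w' v ∧ f w' = m + 1)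
    (H2 : ∀ (m : ℤ) (x₀ x₁ x₂ x₃ : V), G.Adj x₀ x₁ → G.Adj x₁ x₂ → G.Adj x₂ x₃ →
      f x₀ = m - 1 → f x₁ = m → f x₂ = m + 1 → f x₃ = m →
      ∃ y₁ y₂ : V, G.Adj x₀ y₁ ∧ G.Adj y₁ y₂ ∧ G.Adj y₂ x₃ ∧ f y₁ = m ∧ f y₂ = m - 1)
    (u v : V) (huv : G.Reachable u v) (hfuv : f u = f v) (hd : 4 ≤ G.dist u v) :
    ∃ w : V, f w = f u ∧ G.dist u v = G.dist u w + G.dist w v ∧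
      2 ≤ G.dist u w ∧ G.dist u w ≤ G.dist u v - 2 := by
  obtain ⟨p, hp⟩ := huv.exists_walk_length_eq_dist
  cases p with
  | nil => simp at hp; simp [SimpleGraph.dist_self] at hd
  | @cons _ x₁ _ h p' =>
    have key : ∃ (y z : V) (q : G.Walk z v), G.Adj u y ∧ G.Adj y z ∧
        f z = f u ∧ q.length + 2 = p'.length + 1 := by
      have hb : f u - f x₁ = 1 ∨ f u - f x₁ = -1 := abs_eq (by norm_num) |>.mp (hf u x₁ h)
      rcases hb with hb | hb
      · obtain ⟨y, z, q, h1, h2, h3, h4, h5⟩ :=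
          claimC' hf H1 p' u h (by omega) (by omega)
        exact ⟨y, z, q, h1, h2, h4, h5⟩
      · obtain ⟨y, z, q, h1, h2, h3, h4, h5⟩ :=
          claimC hf H2 p' u h (by omega) (by omega)
        exact ⟨y, z, q, h1, h2, h4, h5⟩
    obtain ⟨y, z, q, h1, h2, h3, h4⟩ := key
    have hlen : q.length + 2 = G.dist u v := by
      simp only [SimpleGraph.Walk.length_cons] at hp; omega
    have hduz : G.dist u z ≤ 2 := by
      have := G.dist_le (SimpleGraph.Walk.cons h1 (SimpleGraph.Walk.cons h2 .nil))
      simpa using this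
    have hdzv : G.dist z v ≤ q.length := G.dist_le q
    have htri : G.dist u v ≤ G.dist u z + G.dist z v := by
      obtain ⟨p1, hp1⟩ :=
        (SimpleGraph.Walk.cons h1 (SimpleGraph.Walk.cons h2 .nil)).reachable.exists_walk_length_eq_dist
      obtain ⟨p2, hp2⟩ := q.reachable.exists_walk_length_eq_dist
      have := G.dist_le (p1.append p2)
      rwa [SimpleGraph.Walk.length_append, hp1, hp2] at this
    exact ⟨z, h3, by omega, by omega, by omega⟩
end

section
/- Assume G and f satisfy the rewiring properties (H1) and (H2). Let u and v be reachable vertices. Then there exists a vertex w with f w = f u such that G.dist u v = G.dist u w + G.dist w v and G.dist w v = |f u − f v|. (Abstract form of Proposition 2.4(2): if L is an m-component link and L' is an m'-component link, then there exists an m-component link L'' with d(L,L') = d(L,L'') + d(L'',L') and d(L'',L') = |m − m'|; the rewiring properties are the content of Lemma 2.2.) -/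
open SimpleGraph

section Aux
variable {V : Type*} {G : SimpleGraph V} {f : V → ℤ}

/-- Along any walk, `f` changes by at most the length. -/
private lemma abs_sub_le_length (hf : ∀ u v : V, G.Adj u v → |f u - f v| = 1) :
    ∀ {a b : V} (p : G.Walk a b), |f b - f a| ≤ (p.length : ℤ) := by
  intro a b p
  induction p with
  | nil => simp
  | @cons a x b h p ih =>
    have h1 : |f a - f x| = 1 := hf a x h
    have : |f b - f a| ≤ |f b - f x| + |f x - f a| := abs_sub_le _ _ _
    rw [abs_sub_comm] at h1
    simp only [SimpleGraph.Walk.length_cons]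
    push_cast
    omega

/-- An ascending walk (length = total rise) can be split at any intermediate level. -/
private lemma ascending_split (hf : ∀ u v : V, G.Adj u v → |f u - f v| = 1) :
    ∀ {a b : V} (p : G.Walk a b), (p.length : ℤ) = f b - f a →
      ∀ c : ℤ, f a ≤ c → c ≤ f b →
      ∃ (w : V) (q : G.Walk a w) (r : G.Walk w b),
        f w = c ∧ (q.length : ℤ) = c - f a ∧ (r.length : ℤ) = f b - c := by
  intro a b p
  induction p with
  | nil =>
    intro hlen c hc1 hc2
    exact ⟨_, .nil, .nil, by omega, by simp; omega, by simp; omega⟩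
  | @cons a x b h p ih =>
    intro hlen c hc1 hc2
    have h1 : |f a - f x| = 1 := hf a x h
    have h2 : |f b - f x| ≤ (p.length : ℤ) := abs_sub_le_length hf p
    simp only [SimpleGraph.Walk.length_cons] at hlen
    push_cast at hlen
    have h2' := abs_le.mp h2
    have hx : f x = f a + 1 := by
      rcases abs_eq (by norm_num : (0:ℤ) ≤ 1) |>.mp h1 with h' | h' <;> omega
    have hplen : (p.length : ℤ) = f b - f x := by omega
    rcases eq_or_lt_of_le hc1 with rfl | hc1'
    · exact ⟨a, .nil, .cons h p, rfl, by simp, by simp; omega⟩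
    · obtain ⟨w, q, r, hw, hq, hr⟩ := ih hplen c (by omega) hc2
      exact ⟨w, .cons h q, r, hw, by simp; omega, hr⟩


/-- A descending walk (length = total fall) can be split at any intermediate level. -/
private lemma descending_split (hf : ∀ u v : V, G.Adj u v → |f u - f v| = 1)
    {a b : V} (p : G.Walk a b) (hlen : (p.length : ℤ) = f a - f b)
    (c : ℤ) (hc1 : f b ≤ c) (hc2 : c ≤ f a) :
    ∃ (w : V) (q : G.Walk a w) (r : G.Walk w b),
      f w = c ∧ (q.length : ℤ) = f a - c ∧ (r.length : ℤ) = c - f b := by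
  have hf' : ∀ u v : V, G.Adj u v → |(-f u) - (-f v)| = 1 := by
    intro u v h
    have := hf u v h
    rw [show (-f u) - (-f v) = -(f u - f v) by ring, abs_neg]
    exact this
  obtain ⟨w, q, r, hw, hq, hr⟩ :=
    ascending_split (f := fun z => -f z) hf' p (by simp; omega) (-c) (by simp; omega)
      (by simp; omega)
  refine ⟨w, q, r, by simpa using congrArg Neg.neg hw, by simp at hq ⊢; omega,
    by simp at hr ⊢; omega⟩

/-- Unimodal rearrangement using H1: any walk can be replaced by an ascent followed by
a descent of the same total length. -/
private lemma lemma_U (hf : ∀ u v : V, G.Adj u v → |f u - f v| = 1)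
    (H1 : ∀ (m : ℤ) (u w v : V), G.Adj u w → G.Adj w v →
      f u = m → f w = m - 1 → f v = m →
      ∃ w' : V, G.Adj u w' ∧ G.Adj w' v ∧ f w' = m + 1) :
    ∀ (n : ℕ) {a b : V} (p : G.Walk a b), p.length = n →
      ∃ (t : V) (q : G.Walk a t) (r : G.Walk t b),
        (q.length : ℤ) = f t - f a ∧ (r.length : ℤ) = f t - f b ∧
        q.length + r.length = n := by
  intro n
  induction n using Nat.strong_induction_on with
  | _ n ih =>
    intro a b p hp
    cases p with
    | nil =>
      subst hp
      exact ⟨a, .nil, .nil, by simp, by simp, by simp⟩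
    | @cons a x b h p' =>
      simp only [SimpleGraph.Walk.length_cons] at hp
      obtain ⟨t, q, r, hq, hr, hsum⟩ := ih p'.length (by omega) p' rfl
      have h1 : |f a - f x| = 1 := hf a x h
      rcases abs_eq (by norm_num : (0:ℤ) ≤ 1) |>.mp h1 with h' | h'
      · -- f x = f a - 1 : first step goes down
        cases q with
        | nil =>
          -- t = x, whole rest is descending; prepend the down step to r
          exact ⟨a, .nil, .cons h r, by simp, by simp; omega,
            by simp at hsum ⊢; omega⟩
        | @cons x x₁ t h1' q₁ =>
          -- ascending q starts with a step x → x₁ which must go up: f x₁ = f x + 1 = f a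
          have hb1 : |f x - f x₁| = 1 := hf x x₁ h1'
          have hb2 : |f t - f x₁| ≤ (q₁.length : ℤ) := abs_sub_le_length hf q₁
          have hb2' := abs_le.mp hb2
          simp only [SimpleGraph.Walk.length_cons] at hq
          push_cast at hq
          have hx₁ : f x₁ = f a := by
            rcases abs_eq (by norm_num : (0:ℤ) ≤ 1) |>.mp hb1 with h'' | h'' <;> omega
          -- valley pattern a, x, x₁ at levels m, m-1, m with m = f a
          obtain ⟨x', hax', hx'x₁, hfx'⟩ :=
            H1 (f a) a x x₁ h h1' rfl (by omega) hx₁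
          -- recurse on the strictly shorter walk x' → x₁ → t → b
          let W : G.Walk x' b := .cons hx'x₁ (q₁.append r)
          have hWlen : W.length = q₁.length + r.length + 1 := by
            simp [W, SimpleGraph.Walk.length_append]
          simp only [SimpleGraph.Walk.length_cons] at hsum
          have hWlt : W.length < n := by omega
          obtain ⟨t', q', r', hq', hr', hsum'⟩ := ih W.length hWlt W rfl
          refine ⟨t', .cons hax' q', r', ?_, hr', ?_⟩
          · simp only [SimpleGraph.Walk.length_cons]; push_cast; omega
          · simp only [SimpleGraph.Walk.length_cons]; omega
      · -- f x = f a + 1 : prepend the up step to q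
        exact ⟨t, .cons h q, r, by simp; omega, hr, by simp; omega⟩


/-- "No two consecutive up-steps" predicate on a walk. -/
private def NUU (f : V → ℤ) {a b : V} (q : G.Walk a b) : Prop :=
  q.darts.Chain' (fun d₁ d₂ => f d₁.toProd.2 ≤ f d₁.toProd.1 ∨ f d₂.toProd.2 ≤ f d₂.toProd.1)

/-- Rearrangement using H2: any walk can be replaced by one of the same length consisting
of a "no double-up" part staying above its endpoint, followed by an ascent. -/
private lemma lemma_D (hf : ∀ u v : V, G.Adj u v → |f u - f v| = 1)
    (H2 : ∀ (m : ℤ) (x₀ x₁ x₂ x₃ : V), G.Adj x₀ x₁ → G.Adj x₁ x₂ → G.Adj x₂ x₃ →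
      f x₀ = m - 1 → f x₁ = m → f x₂ = m + 1 → f x₃ = m →
      ∃ y₁ y₂ : V, G.Adj x₀ y₁ ∧ G.Adj y₁ y₂ ∧ G.Adj y₂ x₃ ∧ f y₁ = m ∧ f y₂ = m - 1) :
    ∀ (n : ℕ) {a b : V} (p : G.Walk a b), p.length = n →
      ∃ (w : V) (q : G.Walk a w) (r : G.Walk w b),
        q.length + r.length = n ∧ (r.length : ℤ) = f b - f w ∧
        (∀ z ∈ q.support, f w ≤ f z) ∧ NUU f q := by
  intro n
  induction n using Nat.strong_induction_on with
  | _ n ih =>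
    intro a b p hp
    cases p with
    | nil =>
      subst hp
      exact ⟨a, .nil, .nil, by simp, by simp, by simp, by simp [NUU, List.Chain']⟩
    | @cons a x b h p' =>
      simp only [SimpleGraph.Walk.length_cons] at hp
      obtain ⟨w, q, r, hsum, hr, hsupp, hnuu⟩ := ih p'.length (by omega) p' rfl
      have h1 : |f a - f x| = 1 := hf a x h
      rcases abs_eq (by norm_num : (0:ℤ) ≤ 1) |>.mp h1 with h' | h'
      · -- f x = f a - 1 : prepend the down step to q
        refine ⟨w, .cons h q, r, by simp only [SimpleGraph.Walk.length_cons]; omega, hr,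
          ?_, ?_⟩
        · intro z hz
          simp only [SimpleGraph.Walk.support_cons, List.mem_cons] at hz
          rcases hz with rfl | hz
          · have := hsupp x q.start_mem_support
            omega
          · exact hsupp z hz
        · simp only [NUU, List.Chain', SimpleGraph.Walk.darts_cons]
          rw [List.isChain_cons]
          refine ⟨fun y _ => Or.inl (by simp; omega), hnuu⟩
      · -- f x = f a + 1
        cases q with
        | nil =>
          -- absorb the up step into the ascending part
          refine ⟨a, .nil, .cons h r, ?_, ?_, by simp, by simp [NUU, List.Chain']⟩
          · simp only [SimpleGraph.Walk.length_cons, SimpleGraph.Walk.length_nil] at hsum ⊢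
            omega
          · simp only [SimpleGraph.Walk.length_cons]; push_cast; omega
        | @cons x x₁ w h1' q₁ =>
          have hb1 : |f x - f x₁| = 1 := hf x x₁ h1'
          rcases abs_eq (by norm_num : (0:ℤ) ≤ 1) |>.mp hb1 with hb' | hb'
          · -- f x₁ = f x - 1 : prepend the up step; the pair (up, down) is fine
            refine ⟨w, .cons h (.cons h1' q₁), r,
              by simp only [SimpleGraph.Walk.length_cons] at hsum ⊢; omega, hr, ?_, ?_⟩
            · intro z hz
              simp only [SimpleGraph.Walk.support_cons, List.mem_cons] at hz
              have hx₁ := hsupp x₁ (by simp [SimpleGraph.Walk.support_cons,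
                q₁.start_mem_support])
              rcases hz with rfl | hz
              · omega
              · exact hsupp z (by simp only [SimpleGraph.Walk.support_cons,
                  List.mem_cons]; exact hz)
            · simp only [NUU, List.Chain', SimpleGraph.Walk.darts_cons] at hnuu ⊢
              rw [List.isChain_cons_cons]
              exact ⟨Or.inr (by simp; omega), hnuu⟩
          · -- f x₁ = f x + 1 : a double-up would start unless the next step goes down
            cases q₁ with
            | nil =>
              -- impossible: w = x₁ lies above x ∈ q.support
              exfalso
              have := hsupp x (by simp [SimpleGraph.Walk.support_cons])
              omega
            | @cons x₁ x₂ w h2' q₂ =>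
              -- NUU forces the step x₁ → x₂ to go down
              have hx₂le : f x₂ ≤ f x₁ := by
                simp only [NUU, List.Chain', SimpleGraph.Walk.darts_cons, List.isChain_cons_cons] at hnuu
                rcases hnuu.1 with h'' | h''
                · omega
                · exact h''
              have hb2 : |f x₁ - f x₂| = 1 := hf x₁ x₂ h2'
              have hx₂ : f x₂ = f x := by
                rcases abs_eq (by norm_num : (0:ℤ) ≤ 1) |>.mp hb2 with h'' | h'' <;> omega
              -- apply H2 to the pattern a, x, x₁, x₂
              obtain ⟨y₁, y₂, hay₁, hy₁y₂, hy₂x₂, hfy₁, hfy₂⟩ :=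
                H2 (f x) a x x₁ x₂ h h1' h2' (by omega) rfl (by omega) hx₂
              -- recurse on the strictly shorter walk y₂ → x₂ → ⋯ → b
              let W : G.Walk y₂ b := .cons hy₂x₂ (q₂.append r)
              have hWlen : W.length = q₂.length + r.length + 1 := by
                simp [W, SimpleGraph.Walk.length_append]
              simp only [SimpleGraph.Walk.length_cons] at hsum
              have hWlt : W.length < n := by omega
              obtain ⟨w', q'', r'', hsum'', hr'', hsupp'', hnuu''⟩ := ih W.length hWlt W rfl
              refine ⟨w', .cons hay₁ (.cons hy₁y₂ q''), r'',
                by simp only [SimpleGraph.Walk.length_cons]; omega, hr'', ?_, ?_⟩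
              · intro z hz
                have hy₂' := hsupp'' y₂ q''.start_mem_support
                simp only [SimpleGraph.Walk.support_cons, List.mem_cons] at hz
                rcases hz with rfl | rfl | hz
                · omega
                · omega
                · exact hsupp'' z hz
              · simp only [NUU, List.Chain', SimpleGraph.Walk.darts_cons] at hnuu'' ⊢
                rw [List.isChain_cons_cons, List.isChain_cons]
                exact ⟨Or.inr (by simp; omega),
                  fun y _ => Or.inl (by simp; omega), hnuu''⟩

end Aux


/-- Abstract form of Proposition 2.4(2): under the rewiring properties (H1) and (H2),
for reachable `u, v` there is a vertex `w` with `f w = f u`, lying on a geodesic from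
`u` to `v`, such that `dist w v = |f u - f v|`. -/
theorem exists_intermediate_level_distance {V : Type*} (G : SimpleGraph V) (f : V → ℤ)
    (hf : ∀ u v : V, G.Adj u v → |f u - f v| = 1)
    (H1 : ∀ (m : ℤ) (u w v : V), G.Adj u w → G.Adj w v →
      f u = m → f w = m - 1 → f v = m →
      ∃ w' : V, G.Adj u w' ∧ G.Adj w' v ∧ f w' = m + 1)
    (H2 : ∀ (m : ℤ) (x₀ x₁ x₂ x₃ : V), G.Adj x₀ x₁ → G.Adj x₁ x₂ → G.Adj x₂ x₃ →
      f x₀ = m - 1 → f x₁ = m → f x₂ = m + 1 → f x₃ = m →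
      ∃ y₁ y₂ : V, G.Adj x₀ y₁ ∧ G.Adj y₁ y₂ ∧ G.Adj y₂ x₃ ∧ f y₁ = m ∧ f y₂ = m - 1)
    (u v : V) (huv : G.Reachable u v) :
    ∃ w : V, f w = f u ∧ G.dist u v = G.dist u w + G.dist w v ∧
      (G.dist w v : ℤ) = |f u - f v| := by
  obtain ⟨p, hp⟩ := huv.exists_walk_length_eq_dist
  by_cases hcase : f v ≤ f u
  · -- use the unimodal rearrangement
    obtain ⟨t, q, r, hq, hr, hsum⟩ := lemma_U hf H1 p.length p rfl
    have h0 : (0:ℤ) ≤ (q.length : ℤ) := Nat.cast_nonneg _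
    obtain ⟨w, r₁, r₂, hw, hr₁, hr₂⟩ := descending_split hf r hr (f u) hcase (by omega)
    refine ⟨w, hw, ?_, ?_⟩
    · -- distances add up
      have hd1 : G.dist u w ≤ q.length + r₁.length := by
        simpa [SimpleGraph.Walk.length_append] using G.dist_le (q.append r₁)
      have hd2 : G.dist w v ≤ r₂.length := G.dist_le r₂
      obtain ⟨s1, hs1⟩ := (q.append r₁).reachable.exists_walk_length_eq_dist
      obtain ⟨s2, hs2⟩ := r₂.reachable.exists_walk_length_eq_dist
      have htri : G.dist u v ≤ G.dist u w + G.dist w v := by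
        calc G.dist u v ≤ (s1.append s2).length := G.dist_le _
          _ = G.dist u w + G.dist w v := by
              simp [SimpleGraph.Walk.length_append, hs1, hs2]
      have hrsplit : r₁.length + r₂.length = r.length := by
        have : ((r₁.length + r₂.length : ℕ) : ℤ) = (r.length : ℤ) := by push_cast; omega
        exact_mod_cast this
      omega
    · -- dist w v = |f u - f v|
      obtain ⟨s2, hs2⟩ := r₂.reachable.exists_walk_length_eq_dist
      have hlow : |f v - f w| ≤ (s2.length : ℤ) := abs_sub_le_length hf s2
      have hlow' : f u - f v ≤ |f v - f w| := by
        rw [hw]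
        exact (neg_le_abs _).trans_eq' (by ring)
      have hd2 : G.dist w v ≤ r₂.length := G.dist_le r₂
      rw [abs_of_nonneg (by omega : (0:ℤ) ≤ f u - f v)]
      have : (G.dist w v : ℤ) ≤ (r₂.length : ℤ) := by exact_mod_cast hd2
      rw [hs2] at hlow
      omega
  · -- f u < f v : use the H2-rearrangement
    push_neg at hcase
    obtain ⟨w₀, q, r, hsum, hr, hsupp, _⟩ := lemma_D hf H2 p.length p rfl
    have hw₀u : f w₀ ≤ f u := hsupp u q.start_mem_support
    obtain ⟨w, r₁, r₂, hw, hr₁, hr₂⟩ :=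
      ascending_split hf r hr (f u) hw₀u (le_of_lt hcase)
    refine ⟨w, hw, ?_, ?_⟩
    · have hd1 : G.dist u w ≤ q.length + r₁.length := by
        simpa [SimpleGraph.Walk.length_append] using G.dist_le (q.append r₁)
      have hd2 : G.dist w v ≤ r₂.length := G.dist_le r₂
      obtain ⟨s1, hs1⟩ := (q.append r₁).reachable.exists_walk_length_eq_dist
      obtain ⟨s2, hs2⟩ := r₂.reachable.exists_walk_length_eq_dist
      have htri : G.dist u v ≤ G.dist u w + G.dist w v := by
        calc G.dist u v ≤ (s1.append s2).length := G.dist_le _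
          _ = G.dist u w + G.dist w v := by
              simp [SimpleGraph.Walk.length_append, hs1, hs2]
      have hrsplit : r₁.length + r₂.length = r.length := by
        have : ((r₁.length + r₂.length : ℕ) : ℤ) = (r.length : ℤ) := by push_cast; omega
        exact_mod_cast this
      omega
    · obtain ⟨s2, hs2⟩ := r₂.reachable.exists_walk_length_eq_dist
      have hlow : |f v - f w| ≤ (s2.length : ℤ) := abs_sub_le_length hf s2
      have hlow' : f v - f u ≤ |f v - f w| := by rw [hw]; exact le_abs_self _
      have hd2 : G.dist w v ≤ r₂.length := G.dist_le r₂
      rw [abs_of_nonpos (by omega : f u - f v ≤ 0)]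
      have : (G.dist w v : ℤ) ≤ (r₂.length : ℤ) := by exact_mod_cast hd2
      rw [hs2] at hlow
      omega
end

section
/- Assume G and f satisfy the rewiring properties (H1) and (H2). Let u and v be reachable vertices with f u = f v. Then there exist k : ℕ and a sequence of vertices w₀ = u, w₁, …, w_k = v such that f wᵢ = f u for every i, G.dist w_{i−1} wᵢ = 2 for every i ∈ {1, …, k}, and G.dist u v = 2k. (Iterated form of Proposition 2.4(1), used implicitly in constructing the tables of minimal coherent band pathways: any minimal coherent band pathway between two links with the same number m of components can be decomposed into length-2 minimal pathways whose endpoints are all m-component links.) -/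
section helpers

variable {V : Type*} {G : SimpleGraph V}

lemma chain_walk (c : ℕ → V) :
    ∀ (t a : ℕ), (∀ j, a ≤ j → j < a + t → G.Adj (c j) (c (j+1))) →
      ∃ p : G.Walk (c a) (c (a + t)), p.length = t := by
  intro t
  induction t with
  | zero => intro a _; exact ⟨SimpleGraph.Walk.nil, rfl⟩
  | succ t ih =>
    intro a h
    have e : G.Adj (c a) (c (a+1)) := h a le_rfl (by omega)
    obtain ⟨p, hp⟩ := ih (a+1) (fun j hj hj' => h j (by omega) (by omega))
    exact ⟨(SimpleGraph.Walk.cons e p).copy rfl (congrArg c (by omega)), by simp [hp]⟩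

lemma sum_lt_of_pointwise {s : Finset ℕ} {F F' : ℕ → ℕ} {i : ℕ} (hi : i ∈ s)
    (h : ∀ j ∈ s, j ≠ i → F' j = F j) (hlt : F' i < F i) :
    ∑ j ∈ s, F' j < ∑ j ∈ s, F j := by
  rw [← Finset.sum_erase_add _ _ hi, ← Finset.sum_erase_add _ _ hi]
  have : ∑ j ∈ s.erase i, F' j = ∑ j ∈ s.erase i, F j := by
    refine Finset.sum_congr rfl fun j hj => h j (Finset.mem_of_mem_erase hj)
      (Finset.ne_of_mem_erase hj)
  omega

lemma rewire (f : V → ℤ)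
    (hf : ∀ u v : V, G.Adj u v → |f u - f v| = 1)
    (H1 : ∀ (m : ℤ) (u w v : V), G.Adj u w → G.Adj w v →
      f u = m → f w = m - 1 → f v = m →
      ∃ w' : V, G.Adj u w' ∧ G.Adj w' v ∧ f w' = m + 1)
    (H2 : ∀ (m : ℤ) (x₀ x₁ x₂ x₃ : V), G.Adj x₀ x₁ → G.Adj x₁ x₂ → G.Adj x₂ x₃ →
      f x₀ = m - 1 → f x₁ = m → f x₂ = m + 1 → f x₃ = m →
      ∃ y₁ y₂ : V, G.Adj x₀ y₁ ∧ G.Adj y₁ y₂ ∧ G.Adj y₂ x₃ ∧ f y₁ = m ∧ f y₂ = m - 1)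
    (m : ℤ) (n : ℕ) :
    ∀ (B : ℕ) (c : ℕ → V), f (c 0) = m → f (c n) = m →
      (∀ j, j < n → G.Adj (c j) (c (j+1))) →
      (∑ j ∈ Finset.range (n+1), (|f (c j) - m| - 1).toNat) ≤ B →
      ∃ c' : ℕ → V, c' 0 = c 0 ∧ c' n = c n ∧
        (∀ j, j < n → G.Adj (c' j) (c' (j+1))) ∧ (∀ j, j ≤ n → |f (c' j) - m| ≤ 1) := by
  intro B
  induction B with
  | zero =>
    intro c h0 hn hadj hsum
    refine ⟨c, rfl, rfl, hadj, fun j hj => ?_⟩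
    by_contra hbad
    have hmem : j ∈ Finset.range (n+1) := Finset.mem_range.mpr (by omega)
    have : (|f (c j) - m| - 1).toNat ≤ 0 := le_trans (Finset.single_le_sum
      (f := fun j => (|f (c j) - m| - 1).toNat) (fun _ _ => Nat.zero_le _) hmem) hsum
    have habs : 0 ≤ |f (c j) - m| := abs_nonneg _
    omega
  | succ B ih =>
    intro c h0 hn hadj hsum
    by_cases hall : ∀ j, j ≤ n → |f (c j) - m| ≤ 1
    · exact ⟨c, rfl, rfl, hadj, hall⟩
    push_neg at hall
    obtain ⟨j₀, hj₀n, hj₀⟩ := hall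
    have hj₀' : f (c j₀) - m ≥ 2 ∨ f (c j₀) - m ≤ -2 := by
      rcases abs_cases (f (c j₀) - m) with ⟨h, _⟩ | ⟨h, _⟩ <;> omega
    have hstep : ∀ j, j < n → f (c j) - f (c (j+1)) = 1 ∨ f (c j) - f (c (j+1)) = -1 := by
      intro j hj
      rcases abs_cases (f (c j) - f (c (j+1))) with ⟨h, _⟩ | ⟨h, _⟩ <;>
        (have := hf _ _ (hadj j hj); omega)
    have hj₀0 : j₀ ≠ 0 := by rintro rfl; omega
    have hj₀n' : j₀ ≠ n := by rintro rfl; omega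
    have hn2 : 2 ≤ n := by omega
    set S : Finset ℤ := (Finset.range (n+1)).image (fun j => f (c j)) with hS
    have hSne : S.Nonempty := ⟨f (c 0), Finset.mem_image.mpr ⟨0, Finset.mem_range.mpr (by omega), rfl⟩⟩
    set μ := S.min' hSne with hμdef
    set M := S.max' hSne with hMdef
    have hmemS : ∀ j, j ≤ n → f (c j) ∈ S := fun j hj =>
      Finset.mem_image.mpr ⟨j, Finset.mem_range.mpr (by omega), rfl⟩
    have hμle : ∀ j, j ≤ n → μ ≤ f (c j) := fun j hj => S.min'_le _ (hmemS j hj)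
    have hleM : ∀ j, j ≤ n → f (c j) ≤ M := fun j hj => S.le_max' _ (hmemS j hj)
    by_cases hμcase : μ ≤ m - 2
    · -- raise a global minimum using H1
      obtain ⟨jr, hjr, hjval⟩ := Finset.mem_image.mp (S.min'_mem hSne)
      rw [Finset.mem_range] at hjr
      rw [← hμdef] at hjval
      have hjrn : jr ≤ n := by omega
      have hjr0 : jr ≠ 0 := by rintro rfl; omega
      have hjrn' : jr ≠ n := by rintro rfl; omega
      obtain ⟨p, rfl⟩ : ∃ p, jr = p + 1 := ⟨jr - 1, by omega⟩
      have hp2 : p + 2 ≤ n := by omega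
      have hfp : f (c p) = μ + 1 := by
        have h1 := hstep p (by omega)
        have h2 := hμle p (by omega)
        omega
      have hfp2 : f (c (p+2)) = μ + 1 := by
        have h1 : f (c (p+1)) - f (c (p+2)) = 1 ∨ f (c (p+1)) - f (c (p+2)) = -1 :=
          hstep (p+1) (by omega)
        have h2 := hμle (p+2) (by omega)
        omega
      obtain ⟨w', hw1, hw2, hw3⟩ := H1 (μ+1) (c p) (c (p+1)) (c (p+2))
        (hadj p (by omega)) (hadj (p+1) (by omega)) hfp (by omega) hfp2
      set c' : ℕ → V := Function.update c (p+1) w' with hc'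
      have hc'eq : ∀ j, j ≠ p + 1 → c' j = c j := fun j hj => Function.update_of_ne hj _ _
      have hc'p : c' (p+1) = w' := Function.update_self _ _ _
      have hadj' : ∀ j, j < n → G.Adj (c' j) (c' (j+1)) := by
        intro j hj
        rcases eq_or_ne j p with rfl | hjp
        · rw [hc'eq j (by omega), hc'p]; exact hw1
        rcases eq_or_ne j (p+1) with rfl | hjp1
        · rw [hc'p, hc'eq (p+1+1) (by omega)]; exact hw2
        · rw [hc'eq j hjp1, hc'eq (j+1) (by omega)]; exact hadj j hj
      have hsum' : (∑ j ∈ Finset.range (n+1), (|f (c' j) - m| - 1).toNat) ≤ B := by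
        have hlt : (∑ j ∈ Finset.range (n+1), (|f (c' j) - m| - 1).toNat) <
            (∑ j ∈ Finset.range (n+1), (|f (c j) - m| - 1).toNat) := by
          refine sum_lt_of_pointwise (i := p + 1) (Finset.mem_range.mpr (by omega))
            (fun j _ hj => by rw [hc'eq j hj]) ?_
          rw [hc'p, hw3, hjval]
          have h1 : |μ + 1 + 1 - m| = m - μ - 2 := by rw [abs_of_nonpos (by omega)]; ring
          have h2 : |μ - m| = m - μ := by rw [abs_of_nonpos (by omega)]; ring
          rw [h1, h2]; omega
        omega
      obtain ⟨c'', e0, en, hA, hB⟩ := ih c' (by rw [hc'eq 0 (by omega)]; exact h0)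
        (by rw [hc'eq n (by omega)]; exact hn) hadj' hsum'
      exact ⟨c'', by rw [e0, hc'eq 0 (by omega)], by rw [en, hc'eq n (by omega)], hA, hB⟩
    · -- lower the first global maximum using H2
      push_neg at hμcase
      have hM : m + 2 ≤ M := by
        have h1 := hleM j₀ hj₀n
        have h2 := hμle j₀ hj₀n
        omega
      have hex : ∃ j, j ≤ n ∧ f (c j) = M := by
        obtain ⟨jr, hjr, hjval⟩ := Finset.mem_image.mp (S.max'_mem hSne)
        rw [Finset.mem_range] at hjr
        rw [← hMdef] at hjval
        exact ⟨jr, by omega, hjval⟩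
      classical
      obtain ⟨i, hin, hiM, hmin⟩ : ∃ i, i ≤ n ∧ f (c i) = M ∧ ∀ j, j < i → f (c j) ≠ M := by
        refine ⟨Nat.find hex, (Nat.find_spec hex).1, (Nat.find_spec hex).2, fun j hj hjM => ?_⟩
        exact Nat.find_min hex hj ⟨le_trans (le_of_lt hj) (Nat.find_spec hex).1, hjM⟩
      have hi0 : i ≠ 0 := by rintro rfl; omega
      have hi1 : i ≠ 1 := by
        rintro rfl
        have h1 : f (c 0) - f (c 1) = 1 ∨ f (c 0) - f (c 1) = -1 := hstep 0 (by omega)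
        omega
      have hinn : i ≠ n := by rintro rfl; omega
      obtain ⟨p, rfl⟩ : ∃ p, i = p + 2 := ⟨i - 2, by omega⟩
      have hp3 : p + 3 ≤ n := by omega
      have hfp1 : f (c (p+1)) = M - 1 := by
        have h1 : f (c (p+1)) - f (c (p+2)) = 1 ∨ f (c (p+1)) - f (c (p+2)) = -1 :=
          hstep (p+1) (by omega)
        have h2 := hleM (p+1) (by omega)
        have h3 := hmin (p+1) (by omega)
        omega
      have hfp0 : f (c p) = M - 2 := by
        have h1 := hstep p (by omega)
        have h2 := hmin p (by omega)
        omega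
      have hfp3 : f (c (p+3)) = M - 1 := by
        have h1 : f (c (p+2)) - f (c (p+3)) = 1 ∨ f (c (p+2)) - f (c (p+3)) = -1 :=
          hstep (p+2) (by omega)
        have h2 := hleM (p+3) (by omega)
        omega
      obtain ⟨y₁, y₂, hy1, hy2, hy3, hfy1, hfy2⟩ := H2 (M-1) (c p) (c (p+1)) (c (p+2)) (c (p+3))
        (hadj p (by omega)) (hadj (p+1) (by omega)) (hadj (p+2) (by omega))
        (by omega) (by omega) (by omega) (by omega)
      set c' : ℕ → V := Function.update (Function.update c (p+1) y₁) (p+2) y₂ with hc'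
      have hc'eq : ∀ j, j ≠ p + 1 → j ≠ p + 2 → c' j = c j := by
        intro j h1 h2
        rw [hc', Function.update_of_ne h2, Function.update_of_ne h1]
      have hc'p1 : c' (p+1) = y₁ := by
        rw [hc', Function.update_of_ne (by omega), Function.update_self]
      have hc'p2 : c' (p+2) = y₂ := by rw [hc', Function.update_self]
      have hadj' : ∀ j, j < n → G.Adj (c' j) (c' (j+1)) := by
        intro j hj
        rcases eq_or_ne j p with rfl | hjp
        · rw [hc'eq j (by omega) (by omega), hc'p1]; exact hy1
        rcases eq_or_ne j (p+1) with rfl | hjp1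
        · rw [hc'p1, hc'p2]; exact hy2
        rcases eq_or_ne j (p+2) with rfl | hjp2
        · rw [hc'p2, hc'eq (p+2+1) (by omega) (by omega)]; exact hy3
        · rw [hc'eq j hjp1 hjp2, hc'eq (j+1) (by omega) (by omega)]; exact hadj j hj
      have hsum' : (∑ j ∈ Finset.range (n+1), (|f (c' j) - m| - 1).toNat) ≤ B := by
        have hlt : (∑ j ∈ Finset.range (n+1), (|f (c' j) - m| - 1).toNat) <
            (∑ j ∈ Finset.range (n+1), (|f (c j) - m| - 1).toNat) := by
          refine sum_lt_of_pointwise (i := p + 2) (Finset.mem_range.mpr (by omega))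
            (fun j _ hj => ?_) ?_
          · rcases eq_or_ne j (p+1) with rfl | hjp1
            · rw [hc'p1, hfy1, hfp1]
            · rw [hc'eq j hjp1 hj]
          · rw [hc'p2, hfy2, hiM]
            have h1 : |M - 1 - 1 - m| = M - 2 - m := by rw [abs_of_nonneg (by omega)]; ring
            have h2 : |M - m| = M - m := by rw [abs_of_nonneg (by omega)]
            rw [h1, h2]; omega
        omega
      obtain ⟨c'', e0, en, hA, hB⟩ := ih c' (by rw [hc'eq 0 (by omega) (by omega)]; exact h0)
        (by rw [hc'eq n (by omega) (by omega)]; exact hn) hadj' hsum'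
      exact ⟨c'', by rw [e0, hc'eq 0 (by omega) (by omega)],
        by rw [en, hc'eq n (by omega) (by omega)], hA, hB⟩

end helpers


/-- Iterated form of Proposition 2.4(1): under the rewiring properties (H1) and (H2),
any minimal pathway between reachable vertices `u, v` with `f u = f v` decomposes into
length-2 minimal pathways whose endpoints all have the same `f`-value as `u`. -/
theorem exists_chain_of_length_two_geodesics {V : Type*} (G : SimpleGraph V) (f : V → ℤ)
    (hf : ∀ u v : V, G.Adj u v → |f u - f v| = 1)
    (H1 : ∀ (m : ℤ) (u w v : V), G.Adj u w → G.Adj w v →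
      f u = m → f w = m - 1 → f v = m →
      ∃ w' : V, G.Adj u w' ∧ G.Adj w' v ∧ f w' = m + 1)
    (H2 : ∀ (m : ℤ) (x₀ x₁ x₂ x₃ : V), G.Adj x₀ x₁ → G.Adj x₁ x₂ → G.Adj x₂ x₃ →
      f x₀ = m - 1 → f x₁ = m → f x₂ = m + 1 → f x₃ = m →
      ∃ y₁ y₂ : V, G.Adj x₀ y₁ ∧ G.Adj y₁ y₂ ∧ G.Adj y₂ x₃ ∧ f y₁ = m ∧ f y₂ = m - 1)
    (u v : V) (huv : G.Reachable u v) (hfuv : f u = f v) :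
    ∃ (k : ℕ) (w : Fin (k + 1) → V), w 0 = u ∧ w (Fin.last k) = v ∧
      (∀ i : Fin (k + 1), f (w i) = f u) ∧
      (∀ i : Fin k, G.dist (w i.castSucc) (w i.succ) = 2) ∧
      G.dist u v = 2 * k := by
  classical
  obtain ⟨p, hp⟩ := huv.exists_walk_length_eq_dist
  set m := f u with hm
  set n := G.dist u v with hndef
  set c : ℕ → V := fun j => p.getVert j with hc
  have hadj : ∀ j, j < n → G.Adj (c j) (c (j+1)) := fun j hj =>
    p.adj_getVert_succ (by omega)
  have hc0 : c 0 = u := p.getVert_zero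
  have hcn : c n = v := by rw [hc]; simp only; rw [← hp]; exact p.getVert_length
  have h0 : f (c 0) = m := by rw [hc0]
  have hnv : f (c n) = m := by rw [hcn, ← hfuv]
  obtain ⟨c', hc'0, hc'n, hadj', hbnd⟩ := rewire f hf H1 H2 m n _ c h0 hnv hadj le_rfl
  have hc'0u : c' 0 = u := by rw [hc'0, hc0]
  have hc'nv : c' n = v := by rw [hc'n, hcn]
  -- parity invariant
  have hpar : ∀ j, j ≤ n → (f (c' j) - m + j) % 2 = 0 := by
    intro j
    induction j with
    | zero => intro _; rw [hc'0, h0]; simp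
    | succ j ihj =>
      intro hj
      have h2 := ihj (by omega)
      have h1 := hf _ _ (hadj' j (by omega))
      rcases abs_cases (f (c' j) - f (c' (j+1))) with ⟨h, _⟩ | ⟨h, _⟩ <;>
        · push_cast at h2 ⊢
          omega
  have hneven : n % 2 = 0 := by
    have h1 := hpar n le_rfl
    have h2 : f (c' n) = m := by rw [hc'nv, ← hfuv]
    rw [h2] at h1
    omega
  have hmval : ∀ j, j ≤ n → j % 2 = 0 → f (c' j) = m := by
    intro j hj hje
    have h1 := hpar j hj
    have h2 := hbnd j hj
    rcases abs_cases (f (c' j) - m) with ⟨h, _⟩ | ⟨h, _⟩ <;> omega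
  set k := n / 2 with hk
  have hkn : n = 2 * k := by omega
  refine ⟨k, fun i => c' (2 * (i : ℕ)), ?_, ?_, ?_, ?_, ?_⟩
  · simpa using hc'0u
  · simp only [Fin.val_last]
    rw [← hkn, hc'nv]
  · intro i
    have hi : (i : ℕ) ≤ k := by omega
    exact hmval (2 * i) (by omega) (by omega)
  · intro i
    have hik : (i : ℕ) < k := i.isLt
    simp only [Fin.coe_castSucc, Fin.val_succ]
    have h22 : 2 * ((i : ℕ) + 1) = 2 * (i : ℕ) + 2 := by ring
    rw [h22]
    set a := 2 * (i : ℕ) with ha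
    have ha2 : a + 2 ≤ n := by omega
    -- upper bound
    obtain ⟨q, hq⟩ := chain_walk c' 2 a (fun j hj hj' => hadj' j (by omega))
    have hle2 : G.dist (c' a) (c' (a + 2)) ≤ 2 := by
      have h := SimpleGraph.dist_le q; omega
    -- lower bound
    have hge2 : ¬ G.dist (c' a) (c' (a + 2)) ≤ 1 := by
      intro hle1
      obtain ⟨q1, hq1⟩ := chain_walk c' a 0 (fun j hj hj' => hadj' j (by omega))
      have hreach : G.Reachable (c' a) (c' (a + 2)) := ⟨q⟩
      obtain ⟨q2, hq2⟩ : ∃ q2 : G.Walk (c' a) (c' (a + 2)), q2.length ≤ 1 := by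
        by_cases hd : G.dist (c' a) (c' (a + 2)) = 0
        · have heq : c' a = c' (a + 2) := hreach.dist_eq_zero_iff.mp hd
          exact ⟨SimpleGraph.Walk.nil.copy rfl heq, by simp⟩
        · obtain ⟨q2, hq2⟩ := SimpleGraph.exists_walk_of_dist_ne_zero hd
          exact ⟨q2, by rw [hq2]; exact hle1⟩
      obtain ⟨q3, hq3⟩ := chain_walk c' (n - (a + 2)) (a + 2)
        (fun j hj hj' => hadj' j (by omega))
      have e1 : c' 0 = u := hc'0u
      have e3 : c' ((a + 2) + (n - (a + 2))) = v := by
        rw [show (a + 2) + (n - (a + 2)) = n from by omega]; exact hc'nv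
      let q1' : G.Walk u (c' a) := q1.copy e1 (congrArg c' (Nat.zero_add a))
      let q3' : G.Walk (c' (a + 2)) v := q3.copy rfl e3
      have hW := SimpleGraph.dist_le ((q1'.append q2).append q3')
      simp only [SimpleGraph.Walk.length_append, SimpleGraph.Walk.length_copy, q1', q3',
        hq1, hq3] at hW
      omega
    omega
  · omega
end
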